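/- arXiv:0707.0713 — 2 statements merged into one kernel-verified Lean document; each statement's English description precedes it below -/
import Mathlib

section
/- For a pure bipartite state ψ with coefficients α_{i₁i₂}, the generalized concurrence C(ψ) = (N Σ_{l₁>k₁} Σ_{l₂>k₂} |α_{k₁k₂}α_{l₁l₂} − α_{l₁k₂}α_{k₁l₂}|²)^{1/2} (for any fixed normalization constant N > 0) vanishes if and only if ψ is a product state. -/
open TensorProduct

-- coordinate extraction
lemma coord_aux {N₁ N₂ : ℕ} (α : Fin N₁ → Fin N₂ → ℂ) (v : Fin N₁ → ℂ) (w : Fin N₂ → ℂ)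
    (h : (∑ i₁ : Fin N₁, ∑ i₂ : Fin N₂,
        α i₁ i₂ • ((Pi.single i₁ 1 : Fin N₁ → ℂ) ⊗ₜ[ℂ] (Pi.single i₂ 1 : Fin N₂ → ℂ)))
        = v ⊗ₜ[ℂ] w) (i : Fin N₁) (j : Fin N₂) : α i j = v i * w j := by
  let φ : (Fin N₁ → ℂ) ⊗[ℂ] (Fin N₂ → ℂ) →ₗ[ℂ] ℂ :=
    TensorProduct.lift ((LinearMap.mul ℂ ℂ).compl₁₂ (LinearMap.proj i) (LinearMap.proj j))
  have h2 := congrArg φ h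
  simp only [map_sum, map_smul, φ, TensorProduct.lift.tmul, LinearMap.compl₁₂_apply,
    LinearMap.proj_apply, LinearMap.mul_apply', Pi.single_apply, smul_eq_mul,
    mul_ite, mul_one, mul_zero, ite_mul, zero_mul, Finset.sum_ite_eq, Finset.mem_univ,
    if_true] at h2
  simpa using h2

lemma sum_tensor {N₁ N₂ : ℕ} (v : Fin N₁ → ℂ) (w : Fin N₂ → ℂ) :
    (∑ i₁ : Fin N₁, ∑ i₂ : Fin N₂,
      (v i₁ * w i₂) • ((Pi.single i₁ 1 : Fin N₁ → ℂ) ⊗ₜ[ℂ] (Pi.single i₂ 1 : Fin N₂ → ℂ)))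
      = v ⊗ₜ[ℂ] w := by
  have hv : v = ∑ i : Fin N₁, v i • (Pi.single i 1 : Fin N₁ → ℂ) := by
    ext x; simp [Pi.single_apply]
  have hw : w = ∑ j : Fin N₂, w j • (Pi.single j 1 : Fin N₂ → ℂ) := by
    ext x; simp [Pi.single_apply]
  conv_rhs => rw [hv, hw]
  rw [TensorProduct.sum_tmul]
  refine Finset.sum_congr rfl fun i _ => ?_
  rw [TensorProduct.tmul_sum]
  refine Finset.sum_congr rfl fun j _ => ?_
  simp [TensorProduct.smul_tmul', smul_smul, mul_comm]

theorem stmt11 {N₁ N₂ : ℕ} (α : Fin N₁ → Fin N₂ → ℂ) (𝒩 : ℝ) (h𝒩 : 0 < 𝒩) :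
    Real.sqrt (𝒩 * ∑ k₁ : Fin N₁, ∑ l₁ : Fin N₁, ∑ k₂ : Fin N₂, ∑ l₂ : Fin N₂,
      if k₁ < l₁ ∧ k₂ < l₂ then
        (‖α k₁ k₂ * α l₁ l₂ - α l₁ k₂ * α k₁ l₂‖) ^ 2 else 0) = 0 ↔
    (∃ (v : Fin N₁ → ℂ) (w : Fin N₂ → ℂ),
      (∑ i₁ : Fin N₁, ∑ i₂ : Fin N₂,
        α i₁ i₂ • ((Pi.single i₁ 1 : Fin N₁ → ℂ) ⊗ₜ[ℂ] (Pi.single i₂ 1 : Fin N₂ → ℂ)))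
        = v ⊗ₜ[ℂ] w) := by
  have term_nonneg : ∀ (k₁ l₁ : Fin N₁) (k₂ l₂ : Fin N₂), (0:ℝ) ≤
      (if k₁ < l₁ ∧ k₂ < l₂ then
        (‖α k₁ k₂ * α l₁ l₂ - α l₁ k₂ * α k₁ l₂‖) ^ 2 else 0) := by
    intro k₁ l₁ k₂ l₂; split <;> positivity
  have hSnn : (0:ℝ) ≤ ∑ k₁ : Fin N₁, ∑ l₁ : Fin N₁, ∑ k₂ : Fin N₂, ∑ l₂ : Fin N₂,
      if k₁ < l₁ ∧ k₂ < l₂ then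
        (‖α k₁ k₂ * α l₁ l₂ - α l₁ k₂ * α k₁ l₂‖) ^ 2 else 0 := by
    refine Finset.sum_nonneg fun k₁ _ => Finset.sum_nonneg fun l₁ _ =>
      Finset.sum_nonneg fun k₂ _ => Finset.sum_nonneg fun l₂ _ => term_nonneg _ _ _ _
  have key : Real.sqrt (𝒩 * ∑ k₁ : Fin N₁, ∑ l₁ : Fin N₁, ∑ k₂ : Fin N₂, ∑ l₂ : Fin N₂,
      if k₁ < l₁ ∧ k₂ < l₂ then
        (‖α k₁ k₂ * α l₁ l₂ - α l₁ k₂ * α k₁ l₂‖) ^ 2 else 0) = 0 ↔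
      ∀ (k₁ l₁ : Fin N₁) (k₂ l₂ : Fin N₂), k₁ < l₁ → k₂ < l₂ →
        α k₁ k₂ * α l₁ l₂ = α l₁ k₂ * α k₁ l₂ := by
    rw [Real.sqrt_eq_zero (by positivity), mul_eq_zero]
    constructor
    · rintro (h | h)
      · exact absurd h (ne_of_gt h𝒩)
      · intro k₁ l₁ k₂ l₂ h1 h2
        have h0 := (Finset.sum_eq_zero_iff_of_nonneg (fun k₁ _ => Finset.sum_nonneg fun l₁ _ =>
          Finset.sum_nonneg fun k₂ _ => Finset.sum_nonneg fun l₂ _ => term_nonneg _ _ _ _)).mp h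
            k₁ (Finset.mem_univ _)
        have h0 := (Finset.sum_eq_zero_iff_of_nonneg (fun l₁ _ =>
          Finset.sum_nonneg fun k₂ _ => Finset.sum_nonneg fun l₂ _ => term_nonneg _ _ _ _)).mp h0
            l₁ (Finset.mem_univ _)
        have h0 := (Finset.sum_eq_zero_iff_of_nonneg (fun k₂ _ =>
          Finset.sum_nonneg fun l₂ _ => term_nonneg _ _ _ _)).mp h0 k₂ (Finset.mem_univ _)
        have h0 := (Finset.sum_eq_zero_iff_of_nonneg (fun l₂ _ => term_nonneg _ _ _ _)).mp h0
          l₂ (Finset.mem_univ _)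
        rw [if_pos ⟨h1, h2⟩] at h0
        have := pow_eq_zero_iff (n := 2) (by norm_num) |>.mp h0
        have := norm_eq_zero.mp this
        exact sub_eq_zero.mp this
    · intro h
      right
      refine Finset.sum_eq_zero fun k₁ _ => Finset.sum_eq_zero fun l₁ _ =>
        Finset.sum_eq_zero fun k₂ _ => Finset.sum_eq_zero fun l₂ _ => ?_
      split
      · next hlt =>
          rw [sub_eq_zero.mpr (h _ _ _ _ hlt.1 hlt.2), norm_zero]
          norm_num
      · rfl
  rw [key]
  constructor
  · intro hminor
    -- general minor identity
    have hgen : ∀ (a c : Fin N₁) (b d : Fin N₂), α a b * α c d = α c b * α a d := by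
      intro a c b d
      rcases lt_trichotomy a c with hac | hac | hac
      · rcases lt_trichotomy b d with hbd | hbd | hbd
        · exact hminor a c b d hac hbd
        · rw [hbd]; ring
        · have := hminor a c d b hac hbd; linear_combination -this
      · rw [hac]
      · rcases lt_trichotomy b d with hbd | hbd | hbd
        · have := hminor c a b d hac hbd; linear_combination -this
        · rw [hbd]; ring
        · have := hminor c a d b hac hbd; linear_combination this
    by_cases hα : ∀ i j, α i j = 0
    · refine ⟨0, 0, ?_⟩
      rw [TensorProduct.zero_tmul]
      refine Finset.sum_eq_zero fun i _ => Finset.sum_eq_zero fun j _ => ?_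
      rw [hα i j, zero_smul]
    · push_neg at hα
      obtain ⟨a, b, hab⟩ := hα
      refine ⟨fun i => α i b, fun j => α a j / α a b, ?_⟩
      rw [← sum_tensor]
      refine Finset.sum_congr rfl fun i _ => Finset.sum_congr rfl fun j _ => ?_
      congr 1
      field_simp
      linear_combination (hgen a i b j)
  · rintro ⟨v, w, heq⟩ k₁ l₁ k₂ l₂ _ _
    rw [coord_aux α v w heq, coord_aux α v w heq, coord_aux α v w heq, coord_aux α v w heq]
    ring
end

section
/- For a tripartite pure state ψ with coefficients α_{i₁i₂i₃}, the generalized concurrence C(ψ) = (N Σ over all pairs of multi-indices and all j ∈ {1,2,3} of |S^{k_j l_j}|²)^{1/2}, where S^{k_j l_j} = α_{k₁k₂k₃}α_{l₁l₂l₃} − α with k_j and l_j swapped in position j, vanishes if and only if ψ is a product state v₁⊗v₂⊗v₃. -/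
set_option maxHeartbeats 1000000
set_option synthInstance.maxHeartbeats 1000000

open TensorProduct

noncomputable def myB (N₁ N₂ N₃ : ℕ) :
    Module.Basis ((Fin N₁ × Fin N₂) × Fin N₃) ℂ (((Fin N₁ → ℂ) ⊗[ℂ] (Fin N₂ → ℂ)) ⊗[ℂ] (Fin N₃ → ℂ)) :=
  ((Pi.basisFun ℂ (Fin N₁)).tensorProduct (Pi.basisFun ℂ (Fin N₂))).tensorProduct
    (Pi.basisFun ℂ (Fin N₃))

lemma tensor_eq_iff {N₁ N₂ N₃ : ℕ} (α : Fin N₁ → Fin N₂ → Fin N₃ → ℂ)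
    (v₁ : Fin N₁ → ℂ) (v₂ : Fin N₂ → ℂ) (v₃ : Fin N₃ → ℂ) :
    (∑ i₁ : Fin N₁, ∑ i₂ : Fin N₂, ∑ i₃ : Fin N₃,
        α i₁ i₂ i₃ • (((Pi.single i₁ 1 : Fin N₁ → ℂ) ⊗ₜ[ℂ] (Pi.single i₂ 1 : Fin N₂ → ℂ))
          ⊗ₜ[ℂ] (Pi.single i₃ 1 : Fin N₃ → ℂ)))
        = (v₁ ⊗ₜ[ℂ] v₂) ⊗ₜ[ℂ] v₃ ↔ ∀ i j k, α i j k = v₁ i * v₂ j * v₃ k := by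
  set B := myB N₁ N₂ N₃ with hB
  have hBapp : ∀ (i : Fin N₁) (j : Fin N₂) (k : Fin N₃),
      B ((i, j), k) = ((Pi.single i 1 : Fin N₁ → ℂ) ⊗ₜ[ℂ] (Pi.single j 1 : Fin N₂ → ℂ))
        ⊗ₜ[ℂ] (Pi.single k 1 : Fin N₃ → ℂ) := by
    intro i j k
    rw [hB, myB, Module.Basis.tensorProduct_apply, Module.Basis.tensorProduct_apply]
    simp
  have hrepr : ∀ x y, x = y ↔ ∀ idx, B.repr x idx = B.repr y idx := by
    intro x y
    constructor
    · rintro rfl _; rfl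
    · intro h
      apply B.repr.injective
      ext idx
      exact h idx
  rw [hrepr]
  have h1 : ∀ (i : Fin N₁) (j : Fin N₂) (k : Fin N₃),
      B.repr ((v₁ ⊗ₜ[ℂ] v₂) ⊗ₜ[ℂ] v₃) ((i, j), k) = v₁ i * v₂ j * v₃ k := by
    intro i j k
    rw [hB, myB, Module.Basis.tensorProduct_repr_tmul_apply, Module.Basis.tensorProduct_repr_tmul_apply]
    simp [mul_comm, mul_assoc, mul_left_comm]
  have h2 : ∀ (i : Fin N₁) (j : Fin N₂) (k : Fin N₃),
      B.repr (∑ i₁ : Fin N₁, ∑ i₂ : Fin N₂, ∑ i₃ : Fin N₃,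
        α i₁ i₂ i₃ • (((Pi.single i₁ 1 : Fin N₁ → ℂ) ⊗ₜ[ℂ] (Pi.single i₂ 1 : Fin N₂ → ℂ))
          ⊗ₜ[ℂ] (Pi.single i₃ 1 : Fin N₃ → ℂ))) ((i, j), k) = α i j k := by
    intro i j k
    have : ∀ i₁ i₂ i₃, (((Pi.single i₁ 1 : Fin N₁ → ℂ) ⊗ₜ[ℂ] (Pi.single i₂ 1 : Fin N₂ → ℂ))
          ⊗ₜ[ℂ] (Pi.single i₃ 1 : Fin N₃ → ℂ)) = B ((i₁, i₂), i₃) := fun a b c => (hBapp a b c).symm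
    simp only [this, map_sum, map_smul, Finsupp.coe_finset_sum, Finset.sum_apply,
      Finsupp.coe_smul, Pi.smul_apply, B.repr_self, smul_eq_mul]
    simp only [Finsupp.single_apply, Prod.ext_iff]
    rw [Finset.sum_eq_single i, Finset.sum_eq_single j, Finset.sum_eq_single k] <;>
      simp +contextual [eq_comm]
  constructor
  · intro h i j k
    have := h ((i, j), k)
    rw [h1, h2] at this
    exact this
  · intro h idx
    obtain ⟨⟨i, j⟩, k⟩ := idx
    rw [h1, h2]
    exact h i j k

lemma minors_to_prod {N₁ N₂ N₃ : ℕ} (α : Fin N₁ → Fin N₂ → Fin N₃ → ℂ)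
    (h1 : ∀ k₁ k₂ k₃ l₁ l₂ l₃, α k₁ k₂ k₃ * α l₁ l₂ l₃ = α l₁ k₂ k₃ * α k₁ l₂ l₃)
    (h2 : ∀ k₁ k₂ k₃ l₁ l₂ l₃, α k₁ k₂ k₃ * α l₁ l₂ l₃ = α k₁ l₂ k₃ * α l₁ k₂ l₃) :
    ∃ (v₁ : Fin N₁ → ℂ) (v₂ : Fin N₂ → ℂ) (v₃ : Fin N₃ → ℂ),
      ∀ i j k, α i j k = v₁ i * v₂ j * v₃ k := by
  by_cases hz : ∀ i j k, α i j k = 0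
  · exact ⟨0, 0, 0, fun i j k => by simp [hz]⟩
  · push_neg at hz
    obtain ⟨a, b, c, habc⟩ := hz
    refine ⟨fun i => α i b c, fun j => α a j c / (α a b c)^2, fun k => α a b k, ?_⟩
    intro i j k
    have e1 : α i j k * α a b c = α a j k * α i b c := h1 i j k a b c
    have e2 : α a j k * α a b c = α a b k * α a j c := h2 a j k a b c
    have key : α i j k * (α a b c)^2 = α i b c * α a j c * α a b k := by
      have : α i j k * (α a b c)^2 = (α i j k * α a b c) * α a b c := by ring
      rw [this, e1]
      calc α a j k * α i b c * α a b c = (α a j k * α a b c) * α i b c := by ring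
        _ = α a b k * α a j c * α i b c := by rw [e2]
        _ = _ := by ring
    field_simp
    linear_combination key

lemma sum_zero_forall {n : ℕ} {f : Fin n → ℝ} (hf : ∀ i, 0 ≤ f i) (h : ∑ i, f i = 0) :
    ∀ i, f i = 0 := fun i =>
  (Finset.sum_eq_zero_iff_of_nonneg (fun j _ => hf j)).mp h i (Finset.mem_univ i)

lemma sqrt_mul_zero_iff (𝒩 S : ℝ) (h𝒩 : 0 < 𝒩) (hS : 0 ≤ S) :
    Real.sqrt (𝒩 * S) = 0 ↔ S = 0 := by
  rw [Real.sqrt_eq_zero (mul_nonneg h𝒩.le hS)]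
  constructor
  · intro h
    rcases mul_eq_zero.mp h with h' | h'
    · exact absurd h' (ne_of_gt h𝒩)
    · exact h'
  · intro h; rw [h, mul_zero]

lemma sum6_zero {a b c : ℕ} (f : Fin a → Fin b → Fin c → Fin a → Fin b → Fin c → ℝ)
    (hf : ∀ i j k l m n, 0 ≤ f i j k l m n) :
    (∑ i, ∑ j, ∑ k, ∑ l, ∑ m, ∑ n, f i j k l m n) = 0 ↔
      ∀ i j k l m n, f i j k l m n = 0 := by
  constructor
  · intro h i j k l m n
    have t1 := sum_zero_forall (f := fun i => ∑ j, ∑ k, ∑ l, ∑ m, ∑ n, f i j k l m n)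
      (fun i => Finset.sum_nonneg fun j _ => Finset.sum_nonneg fun k _ =>
        Finset.sum_nonneg fun l _ => Finset.sum_nonneg fun m _ =>
        Finset.sum_nonneg fun n _ => hf i j k l m n) h i
    have t2 := sum_zero_forall (f := fun j => ∑ k, ∑ l, ∑ m, ∑ n, f i j k l m n)
      (fun j => Finset.sum_nonneg fun k _ =>
        Finset.sum_nonneg fun l _ => Finset.sum_nonneg fun m _ =>
        Finset.sum_nonneg fun n _ => hf i j k l m n) t1 j
    have t3 := sum_zero_forall (f := fun k => ∑ l, ∑ m, ∑ n, f i j k l m n)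
      (fun k => Finset.sum_nonneg fun l _ => Finset.sum_nonneg fun m _ =>
        Finset.sum_nonneg fun n _ => hf i j k l m n) t2 k
    have t4 := sum_zero_forall (f := fun l => ∑ m, ∑ n, f i j k l m n)
      (fun l => Finset.sum_nonneg fun m _ =>
        Finset.sum_nonneg fun n _ => hf i j k l m n) t3 l
    have t5 := sum_zero_forall (f := fun m => ∑ n, f i j k l m n)
      (fun m => Finset.sum_nonneg fun n _ => hf i j k l m n) t4 m
    exact sum_zero_forall (f := fun n => f i j k l m n) (fun n => hf i j k l m n) t5 n
  · intro h
    simp [h]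

lemma hmin_lemma {N₁ N₂ N₃ : ℕ} (α : Fin N₁ → Fin N₂ → Fin N₃ → ℂ) :
    (∑ k₁ : Fin N₁, ∑ k₂ : Fin N₂, ∑ k₃ : Fin N₃,
      ∑ l₁ : Fin N₁, ∑ l₂ : Fin N₂, ∑ l₃ : Fin N₃,
        ((‖α k₁ k₂ k₃ * α l₁ l₂ l₃ - α l₁ k₂ k₃ * α k₁ l₂ l₃‖) ^ 2 +
         (‖α k₁ k₂ k₃ * α l₁ l₂ l₃ - α k₁ l₂ k₃ * α l₁ k₂ l₃‖) ^ 2 +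
         (‖α k₁ k₂ k₃ * α l₁ l₂ l₃ - α k₁ k₂ l₃ * α l₁ l₂ k₃‖) ^ 2)) = 0 ↔
    ∀ (k₁ : Fin N₁) (k₂ : Fin N₂) (k₃ : Fin N₃) (l₁ : Fin N₁) (l₂ : Fin N₂) (l₃ : Fin N₃),
      α k₁ k₂ k₃ * α l₁ l₂ l₃ = α l₁ k₂ k₃ * α k₁ l₂ l₃ ∧
      α k₁ k₂ k₃ * α l₁ l₂ l₃ = α k₁ l₂ k₃ * α l₁ k₂ l₃ ∧
      α k₁ k₂ k₃ * α l₁ l₂ l₃ = α k₁ k₂ l₃ * α l₁ l₂ k₃ := by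
  rw [sum6_zero _ (fun i j k l m n => by positivity)]
  constructor
  · intro h k₁ k₂ k₃ l₁ l₂ l₃
    have t6 := h k₁ k₂ k₃ l₁ l₂ l₃
    have n1 := norm_nonneg
      (α k₁ k₂ k₃ * α l₁ l₂ l₃ - α l₁ k₂ k₃ * α k₁ l₂ l₃)
    have n2 := norm_nonneg
      (α k₁ k₂ k₃ * α l₁ l₂ l₃ - α k₁ l₂ k₃ * α l₁ k₂ l₃)
    have n3 := norm_nonneg
      (α k₁ k₂ k₃ * α l₁ l₂ l₃ - α k₁ k₂ l₃ * α l₁ l₂ k₃)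
    have a1 : ‖α k₁ k₂ k₃ * α l₁ l₂ l₃ - α l₁ k₂ k₃ * α k₁ l₂ l₃‖ = 0 := by
      nlinarith [t6, n1, n2, n3]
    have a2 : ‖α k₁ k₂ k₃ * α l₁ l₂ l₃ - α k₁ l₂ k₃ * α l₁ k₂ l₃‖ = 0 := by
      nlinarith [t6, n1, n2, n3]
    have a3 : ‖α k₁ k₂ k₃ * α l₁ l₂ l₃ - α k₁ k₂ l₃ * α l₁ l₂ k₃‖ = 0 := by
      nlinarith [t6, n1, n2, n3]
    refine ⟨?_, ?_, ?_⟩ <;> rw [← sub_eq_zero]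
    · exact norm_eq_zero.mp a1
    · exact norm_eq_zero.mp a2
    · exact norm_eq_zero.mp a3
  · intro h k₁ k₂ k₃ l₁ l₂ l₃
    obtain ⟨e1, e2, e3⟩ := h k₁ k₂ k₃ l₁ l₂ l₃
    rw [sub_eq_zero.mpr e1, sub_eq_zero.mpr e2, sub_eq_zero.mpr e3]
    simp

theorem stmt15 {N₁ N₂ N₃ : ℕ} (α : Fin N₁ → Fin N₂ → Fin N₃ → ℂ) (𝒩 : ℝ) (h𝒩 : 0 < 𝒩) :
    Real.sqrt (𝒩 * ∑ k₁ : Fin N₁, ∑ k₂ : Fin N₂, ∑ k₃ : Fin N₃,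
      ∑ l₁ : Fin N₁, ∑ l₂ : Fin N₂, ∑ l₃ : Fin N₃,
        ((‖α k₁ k₂ k₃ * α l₁ l₂ l₃ - α l₁ k₂ k₃ * α k₁ l₂ l₃‖) ^ 2 +
         (‖α k₁ k₂ k₃ * α l₁ l₂ l₃ - α k₁ l₂ k₃ * α l₁ k₂ l₃‖) ^ 2 +
         (‖α k₁ k₂ k₃ * α l₁ l₂ l₃ - α k₁ k₂ l₃ * α l₁ l₂ k₃‖) ^ 2)) = 0 ↔
    (∃ (v₁ : Fin N₁ → ℂ) (v₂ : Fin N₂ → ℂ) (v₃ : Fin N₃ → ℂ),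
      (∑ i₁ : Fin N₁, ∑ i₂ : Fin N₂, ∑ i₃ : Fin N₃,
        α i₁ i₂ i₃ • (((Pi.single i₁ 1 : Fin N₁ → ℂ) ⊗ₜ[ℂ] (Pi.single i₂ 1 : Fin N₂ → ℂ))
          ⊗ₜ[ℂ] (Pi.single i₃ 1 : Fin N₃ → ℂ)))
        = (v₁ ⊗ₜ[ℂ] v₂) ⊗ₜ[ℂ] v₃) := by
  rw [sqrt_mul_zero_iff _ _ h𝒩 (by positivity), hmin_lemma α]
  constructor
  · intro h
    obtain ⟨v₁, v₂, v₃, hv⟩ := minors_to_prod α (fun a b c d e f => (h a b c d e f).1)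
      (fun a b c d e f => (h a b c d e f).2.1)
    exact ⟨v₁, v₂, v₃, (tensor_eq_iff α v₁ v₂ v₃).mpr hv⟩
  · rintro ⟨v₁, v₂, v₃, hv⟩
    have hco := (tensor_eq_iff α v₁ v₂ v₃).mp hv
    intro k₁ k₂ k₃ l₁ l₂ l₃
    refine ⟨?_, ?_, ?_⟩ <;> simp only [hco] <;> ring
end
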